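/- For q > 1, the q-Cesàro factorable matrix M on ℓ² with entries m_{ij} = (q−1)q^j/(q^{i+1}−1) for j ≤ i (0 otherwise) satisfies M Q M* = M* P M with P = diag{(q^{n+1}−1)(q^{n+2}+q^{n+1}−1)/[q^{n+1}(q^{n+2}−1)]} and Q = diag{1 + 1/q − 1/q^{n+1}}, and the inequalities Q ≥ I ≥ (1/2)P and (q+1)P ≥ I ≥ (1/(q+1))Q hold; hence M is both posinormal and coposinormal. -/

import Mathlib

open ContinuousLinearMap

noncomputable abbrev QC.H : Type := lp (fun _ : ℕ => ℂ) 2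

namespace QC
noncomputable def a (q : ℝ) (i : ℕ) : ℝ := (q - 1) / (q ^ (i + 1) - 1)
end QC

namespace QC

variable {q : ℝ}

noncomputable def pc (q : ℝ) (n : ℕ) : ℝ :=
  ((q ^ (n + 1) - 1) * (q ^ (n + 2) + q ^ (n + 1) - 1)) / (q ^ (n + 1) * (q ^ (n + 2) - 1))
noncomputable def qc (q : ℝ) (n : ℕ) : ℝ := 1 + 1 / q - 1 / q ^ (n + 1)
noncomputable def t (q : ℝ) (i : ℕ) : ℝ := (q - 1) / (q ^ i * (q ^ (i + 1) - 1))

lemma hq0 (hq : 1 < q) : 0 < q := lt_trans one_pos hq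
lemma pow_pos' (hq : 1 < q) (n : ℕ) : 0 < q ^ n := pow_pos (hq0 hq) n
lemma one_lt_pow' (hq : 1 < q) (n : ℕ) : 1 < q ^ (n + 1) := one_lt_pow₀ hq (Nat.succ_ne_zero n)
lemma pow_sub_one_pos (hq : 1 < q) (n : ℕ) : 0 < q ^ (n + 1) - 1 := sub_pos.2 (one_lt_pow' hq n)

lemma t_eq (hq : 1 < q) (m : ℕ) : t q m = a q m / q ^ m := by
  unfold t a
  rw [div_div]
  ring_nf

lemma telescope (hq : 1 < q) (i : ℕ) : a q i ^ 2 * pc q i = t q i - t q (i + 1) := by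
  have h1 := pow_sub_one_pos hq i
  have h2 := pow_sub_one_pos hq (i + 1)
  have h3 := pow_pos' hq i
  have h4 := pow_pos' hq (i + 1)
  unfold a pc t
  have e1 : q ^ (i + 1 + 1) = q ^ (i + 2) := by ring_nf
  rw [e1]
  field_simp
  ring
end QC

namespace QC
lemma S_eval (hq : 1 < q) (m : ℕ) :
    ∑ j ∈ Finset.range (m + 1), q ^ j * (qc q j * q ^ j) = q ^ m * (q ^ (m + 1) - 1) / (q - 1) := by
  have hq0' := hq0 hq
  have hq1 : q - 1 ≠ 0 := ne_of_gt (sub_pos.2 hq)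
  induction m with
  | zero =>
    have : q ≠ 0 := ne_of_gt hq0'
    rw [Finset.sum_range_one]
    unfold qc
    field_simp [qc]
    ring
  | succ n ih =>
    rw [Finset.sum_range_succ, ih]
    unfold qc
    have h3 : (q:ℝ) ^ (n+1) ≠ 0 := ne_of_gt (pow_pos' hq _)
    have h4 : (q:ℝ) ^ (n+2) ≠ 0 := ne_of_gt (pow_pos' hq _)
    field_simp
    ring

lemma a_mul_S (hq : 1 < q) (m : ℕ) : a q m * (q ^ m * (q ^ (m + 1) - 1) / (q - 1)) = q ^ m := by
  have h1 := pow_sub_one_pos hq m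
  have hq1 : q - 1 ≠ 0 := ne_of_gt (sub_pos.2 hq)
  unfold a
  field_simp

lemma pc_nonneg (hq : 1 < q) (n : ℕ) : 0 ≤ pc q n := by
  have h1 := pow_sub_one_pos hq n
  have h2 := pow_sub_one_pos hq (n + 1)
  have h3 := pow_pos' hq (n + 1)
  have h4 := pow_pos' hq (n + 2)
  have h5 : (0:ℝ) < q ^ (n + 2) + q ^ (n + 1) - 1 := by nlinarith
  have h2' : (0:ℝ) < q ^ (n + 2) - 1 := by
    have := pow_sub_one_pos hq (n + 1); simpa using this
  exact le_of_lt (div_pos (mul_pos h1 h5) (mul_pos h3 h2'))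

lemma t_tendsto (hq : 1 < q) : Filter.Tendsto (t q) Filter.atTop (nhds 0) := by
  have h1 : Filter.Tendsto (fun i : ℕ => (1 / q) ^ i) Filter.atTop (nhds 0) := by
    apply tendsto_pow_atTop_nhds_zero_of_lt_one
    · positivity
    · rw [div_lt_one (hq0 hq)]; exact hq
  refine squeeze_zero (fun i => ?_) (fun i => ?_) h1
  · exact le_of_lt (div_pos (sub_pos.2 hq) (mul_pos (pow_pos' hq i) (pow_sub_one_pos hq i)))
  · unfold t
    rw [div_pow, one_pow, div_le_div_iff₀ (mul_pos (pow_pos' hq i) (pow_sub_one_pos hq i))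
      (pow_pos' hq i)]
    have h2 : q ≤ q ^ (i + 1) := le_self_pow₀ (le_of_lt hq) (Nat.succ_ne_zero i)
    nlinarith [pow_pos' hq i]

lemma hasSum_tail (hq : 1 < q) (m : ℕ) :
    HasSum (fun i => if m ≤ i then a q i ^ 2 * pc q i else 0) (t q m) := by
  have key : HasSum (fun n : ℕ => (if m ≤ n + m then a q (n + m) ^ 2 * pc q (n + m) else 0))
      (t q m - ∑ i ∈ Finset.range m, (if m ≤ i then a q i ^ 2 * pc q i else 0)) := by
    have hz : ∑ i ∈ Finset.range m, (if m ≤ i then a q i ^ 2 * pc q i else 0) = 0 := by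
      apply Finset.sum_eq_zero
      intro i hi
      rw [if_neg (by simpa using Finset.mem_range.1 hi)]
    rw [hz, sub_zero]
    have he : (fun n : ℕ => (if m ≤ n + m then a q (n + m) ^ 2 * pc q (n + m) else 0))
        = fun n : ℕ => t q (n + m) - t q (n + m + 1) := by
      funext n
      rw [if_pos (Nat.le_add_left m n), telescope hq]
    rw [he]
    -- telescoping has sum
    have hpart : ∀ N : ℕ, ∑ n ∈ Finset.range N, (t q (n + m) - t q (n + m + 1))
        = t q m - t q (N + m) := by
      intro N
      induction N with
      | zero => simp
      | succ k ih => rw [Finset.sum_range_succ, ih]; ring_nf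
    rw [hasSum_iff_tendsto_nat_of_nonneg (fun n => by
      rw [← telescope hq]
      exact mul_nonneg (sq_nonneg _) (pc_nonneg hq _))]
    simp only [hpart]
    have : Filter.Tendsto (fun N : ℕ => t q (N + m)) Filter.atTop (nhds 0) :=
      (t_tendsto hq).comp (Filter.tendsto_add_atTop_nat m)
    simpa using (tendsto_const_nhds (x := t q m)).sub this
  exact (hasSum_nat_add_iff' m).1 key
end QC

namespace QC
lemma qc_ge_one (hq : 1 < q) (n : ℕ) : 1 ≤ qc q n := by
  unfold qc
  have h : 1 / q ^ (n + 1) ≤ 1 / q := by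
    apply one_div_le_one_div_of_le (hq0 hq)
    exact le_self_pow₀ (le_of_lt hq) (Nat.succ_ne_zero n)
  linarith

lemma qc_le (hq : 1 < q) (n : ℕ) : qc q n ≤ q + 1 := by
  unfold qc
  have h1 : 0 < 1 / q ^ (n + 1) := by positivity
  have h2 : 1 / q ≤ 1 := by rw [div_le_one (hq0 hq)]; linarith
  linarith

lemma pc_le_two (hq : 1 < q) (n : ℕ) : pc q n ≤ 2 := by
  have hx : 1 < q ^ (n + 1) := one_lt_pow' hq n
  have hy : q ^ (n + 2) = q * q ^ (n + 1) := by ring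
  have hxy : (1:ℝ) < q * q ^ (n + 1) := by nlinarith
  have hD : (0:ℝ) < q ^ (n + 1) * (q * q ^ (n + 1) - 1) :=
    mul_pos (by positivity) (sub_pos.2 hxy)
  unfold pc
  rw [hy, div_le_iff₀ hD]
  nlinarith [sq_nonneg (q ^ (n + 1) - 1), sq_nonneg (q - 1)]

lemma pc_lb (hq : 1 < q) (n : ℕ) : 1 ≤ (q + 1) * pc q n := by
  have hx : 1 < q ^ (n + 1) := one_lt_pow' hq n
  have hy : q ^ (n + 2) = q * q ^ (n + 1) := by ring
  have hxy : (1:ℝ) < q * q ^ (n + 1) := by nlinarith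
  have hD : (0:ℝ) < q ^ (n + 1) * (q * q ^ (n + 1) - 1) :=
    mul_pos (by positivity) (sub_pos.2 hxy)
  unfold pc
  rw [hy, ← mul_div_assoc, le_div_iff₀ hD]
  have hxq : q ≤ q ^ (n + 1) := le_self_pow₀ (le_of_lt hq) (Nat.succ_ne_zero n)
  nlinarith [mul_nonneg (sub_nonneg.2 hxq) (by nlinarith : (0:ℝ) ≤ 2*q^3 + q^2 - q - 1),
    mul_nonneg (mul_nonneg (sub_nonneg.2 hxq) (sub_nonneg.2 hxq))
      (by positivity : (0:ℝ) ≤ q^2 + q + 1),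
    sq_nonneg (q^2 - 1)]

lemma qc_ub' (hq : 1 < q) (n : ℕ) : 0 ≤ 1 - 1 / (q + 1) * qc q n := by
  have h1 := qc_le hq n
  have h2 : 0 < q + 1 := by linarith
  have h3 : 1 / (q + 1) * qc q n ≤ 1 / (q + 1) * (q + 1) := by
    apply mul_le_mul_of_nonneg_left h1 (by positivity)
  rw [one_div_mul_cancel (ne_of_gt h2)] at h3
  linarith
end QC

namespace QC
lemma L1 (hq : 1 < q) (k l : ℕ) :
    a q k * ∑ j ∈ Finset.range (k + 1), (if j ≤ l then q ^ j * (qc q j * (a q l * q ^ j)) else 0)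
      = a q (max k l) * q ^ (min k l) := by
  rcases le_total k l with h | h
  · have he : ∀ j ∈ Finset.range (k + 1), (if j ≤ l then q ^ j * (qc q j * (a q l * q ^ j)) else 0)
        = a q l * (q ^ j * (qc q j * q ^ j)) := by
      intro j hj
      rw [if_pos (le_trans (Nat.lt_succ_iff.1 (Finset.mem_range.1 hj)) h)]
      ring
    rw [Finset.sum_congr rfl he, ← Finset.mul_sum, S_eval hq, max_eq_right h, min_eq_left h]
    calc a q k * (a q l * (q ^ k * (q ^ (k + 1) - 1) / (q - 1)))
        = a q l * (a q k * (q ^ k * (q ^ (k + 1) - 1) / (q - 1))) := by ring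
      _ = a q l * q ^ k := by rw [a_mul_S hq]
  · have hf : (Finset.range (k + 1)).filter (fun j => j ≤ l) = Finset.range (l + 1) := by
      ext j
      simp only [Finset.mem_filter, Finset.mem_range]
      omega
    rw [Finset.sum_ite, Finset.sum_const_zero, add_zero, hf]
    have he : ∀ j ∈ Finset.range (l + 1), q ^ j * (qc q j * (a q l * q ^ j))
        = a q l * (q ^ j * (qc q j * q ^ j)) := fun j _ => by ring
    rw [Finset.sum_congr rfl he, ← Finset.mul_sum, S_eval hq, max_eq_left h, min_eq_right h]
    calc a q k * (a q l * (q ^ l * (q ^ (l + 1) - 1) / (q - 1)))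
        = a q k * (a q l * (q ^ l * (q ^ (l + 1) - 1) / (q - 1))) := by ring
      _ = a q k * q ^ l := by rw [a_mul_S hq]

lemma L2 (hq : 1 < q) (k l : ℕ) :
    q ^ k * q ^ l * t q (max k l) = a q (max k l) * q ^ (min k l) := by
  rcases le_total k l with h | h
  · rw [max_eq_right h, min_eq_left h, t_eq hq]
    have : (q:ℝ) ^ l ≠ 0 := ne_of_gt (pow_pos' hq l)
    field_simp
  · rw [max_eq_left h, min_eq_right h, t_eq hq]
    have : (q:ℝ) ^ k ≠ 0 := ne_of_gt (pow_pos' hq k)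
    field_simp
end QC


namespace QC
variable {q : ℝ}

noncomputable def e (l : ℕ) : H := lp.single 2 l (1:ℂ)

lemma e_apply (l j : ℕ) : e l j = if j = l then (1:ℂ) else 0 := by
  unfold e
  rw [lp.single_apply]
  split_ifs with h <;> simp [h]

lemma coord_eq_inner (x : H) (j : ℕ) : x j = (inner ℂ (e j) x : ℂ) := by
  unfold e
  rw [lp.inner_single_left, RCLike.inner_apply', map_one, one_mul]

lemma coeff_cast (i : ℕ) :
    (((q - 1 : ℝ) : ℂ) / ((q : ℂ) ^ (i + 1) - 1)) = ((a q i : ℝ) : ℂ) := by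
  unfold a
  push_cast
  rfl

section M
variable (M : H →L[ℂ] H)
    (hM : ∀ f : H, ∀ i : ℕ,
      M f i = (((q - 1 : ℝ) : ℂ) / ((q : ℂ) ^ (i + 1) - 1)) *
        ∑ j ∈ Finset.range (i + 1), ((q : ℂ) ^ j) * f j)

include hM

lemma M_single (l i : ℕ) :
    M (e l) i = if l ≤ i then ((a q i * q ^ l : ℝ) : ℂ) else 0 := by
  rw [hM, coeff_cast]
  have hs : ∑ j ∈ Finset.range (i + 1), ((q:ℂ) ^ j) * (e l) j
      = if l ≤ i then ((q:ℂ) ^ l) else 0 := by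
    rw [Finset.sum_congr rfl (fun j (_ : j ∈ Finset.range (i+1)) => by
      rw [e_apply, show ((q:ℂ)^j * if j = l then (1:ℂ) else 0) = if j = l then (q:ℂ)^j else 0 by
        split_ifs with h <;> simp [h]])]
    rw [Finset.sum_ite_eq' (Finset.range (i+1)) l fun j => (q:ℂ)^j]
    simp [Nat.lt_succ_iff]
  rw [hs]
  split_ifs with h
  · push_cast; ring
  · simp

omit hM in
lemma adj_coord (x : H) (j : ℕ) :
    (adjoint M x) j = ∑' i, (starRingEnd ℂ) (M (e j) i) * x i := by
  rw [coord_eq_inner, adjoint_inner_right, lp.inner_eq_tsum]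
  exact tsum_congr fun i => by rw [RCLike.inner_apply']

lemma adj_single (l j : ℕ) :
    (adjoint M (e l)) j = if j ≤ l then ((a q l * q ^ j : ℝ) : ℂ) else 0 := by
  rw [adj_coord M]
  rw [tsum_eq_single l (fun i hi => by
    rw [e_apply, if_neg hi, mul_zero])]
  rw [e_apply, if_pos rfl, mul_one, M_single M hM j l]
  split_ifs with h
  · rw [Complex.conj_ofReal]
  · rw [map_zero]


section PQ
variable (Q P : H →L[ℂ] H)
    (hP : ∀ f : H, ∀ n : ℕ,
      P f n = ((((q ^ (n + 1) - 1) * (q ^ (n + 2) + q ^ (n + 1) - 1)) /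
        (q ^ (n + 1) * (q ^ (n + 2) - 1)) : ℝ) : ℂ) * f n)
    (hQ : ∀ f : H, ∀ n : ℕ,
      Q f n = ((1 + 1 / q - 1 / q ^ (n + 1) : ℝ) : ℂ) * f n)

include hQ in
lemma lhs_coord (hq : 1 < q) (l k : ℕ) :
    (M (Q (adjoint M (e l)))) k = ((a q (max k l) * q ^ (min k l) : ℝ) : ℂ) := by
  rw [hM, coeff_cast]
  have hterm : ∀ j ∈ Finset.range (k + 1), (q:ℂ) ^ j * (Q (adjoint M (e l))) j
      = (((if j ≤ l then q ^ j * (qc q j * (a q l * q ^ j)) else 0 : ℝ)) : ℂ) := by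
    intro j _
    rw [hQ, adj_single M hM]
    split_ifs with h
    · unfold qc
      push_cast
      ring
    · simp
  rw [Finset.sum_congr rfl hterm, ← Complex.ofReal_sum, ← Complex.ofReal_mul, L1 hq k l]

include hP in
lemma rhs_coord (hq : 1 < q) (l k : ℕ) :
    (adjoint M (P (M (e l)))) k = ((a q (max k l) * q ^ (min k l) : ℝ) : ℂ) := by
  rw [adj_coord M]
  have hterm : ∀ i : ℕ, (starRingEnd ℂ) (M (e k) i) * (P (M (e l))) i
      = (((if max k l ≤ i then q ^ k * q ^ l * (a q i ^ 2 * pc q i) else 0 : ℝ)) : ℂ) := by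
    intro i
    rw [M_single M hM, hP, M_single M hM]
    by_cases h1 : k ≤ i <;> by_cases h2 : l ≤ i
    · rw [if_pos h1, if_pos h2, if_pos (max_le h1 h2), Complex.conj_ofReal]
      unfold pc
      push_cast
      ring
    · rw [if_pos h1, if_neg h2, if_neg (by omega : ¬ max k l ≤ i), mul_zero, mul_zero,
        Complex.ofReal_zero]
    · rw [if_neg h1, if_neg (by omega : ¬ max k l ≤ i), map_zero, zero_mul, Complex.ofReal_zero]
    · rw [if_neg h1, if_neg (by omega : ¬ max k l ≤ i), map_zero, zero_mul, Complex.ofReal_zero]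
  rw [tsum_congr hterm]
  have hreal : HasSum (fun i => (if max k l ≤ i then q ^ k * q ^ l * (a q i ^ 2 * pc q i) else 0))
      (q ^ k * q ^ l * t q (max k l)) := by
    have h0 := (hasSum_tail hq (max k l)).mul_left (q ^ k * q ^ l)
    have he : (fun i => q ^ k * q ^ l * (if max k l ≤ i then a q i ^ 2 * pc q i else 0))
        = fun i => (if max k l ≤ i then q ^ k * q ^ l * (a q i ^ 2 * pc q i) else 0) := by
      funext i
      split_ifs <;> simp
    rwa [he] at h0
  have hC := hreal.mapL Complex.ofRealCLM
  simp only [Complex.ofRealCLM_apply] at hC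
  rw [hC.tsum_eq]
  exact Complex.ofReal_inj.2 (L2 hq k l)

include hP hQ in
lemma key (hq : 1 < q) : M ∘L Q ∘L adjoint M = adjoint M ∘L P ∘L M := by
  apply ContinuousLinearMap.ext
  intro f
  have hbasis : ∀ (c : ℂ) (l : ℕ), (M ∘L Q ∘L adjoint M) (lp.single 2 l c)
      = (adjoint M ∘L P ∘L M) (lp.single 2 l c) := by
    intro c l
    have h1 : lp.single (E := fun _ : ℕ => ℂ) 2 l c = c • e l := by
      unfold e
      rw [← lp.single_smul]
      norm_num
    rw [h1, map_smul, map_smul]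
    congr 1
    apply lp.ext
    funext k
    simp only [comp_apply]
    rw [lhs_coord M hM Q hQ hq l k, rhs_coord M hM P hP hq l k]
  have hs : HasSum (fun l : ℕ => lp.single 2 l (f l)) f :=
    lp.hasSum_single (by norm_num) f
  have h1 := hs.mapL (M ∘L Q ∘L adjoint M)
  have h2 := hs.mapL (adjoint M ∘L P ∘L M)
  simp only [hbasis] at h1
  exact h1.unique h2

end PQ
end M

lemma diag_isPositive (T : H →L[ℂ] H) (d : ℕ → ℝ) (hd : ∀ n, 0 ≤ d n)
    (hT : ∀ (f : H) (n : ℕ), T f n = (d n : ℂ) * f n) : T.IsPositive := by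
  constructor
  · intro x y
    simp only [ContinuousLinearMap.coe_coe]
    rw [lp.inner_eq_tsum, lp.inner_eq_tsum]
    apply tsum_congr
    intro i
    rw [RCLike.inner_apply, RCLike.inner_apply, hT, hT, map_mul, Complex.conj_ofReal]
    ring
  · intro x
    rw [ContinuousLinearMap.reApplyInnerSelf_apply]
    have hsum := (lp.hasSum_inner (𝕜 := ℂ) (T x) x).mapL Complex.reCLM
    refine hsum.nonneg fun i => ?_
    rw [RCLike.inner_apply', hT]
    simp only [map_mul, Complex.conj_ofReal, Complex.reCLM_apply]
    have h : (starRingEnd ℂ) (x i) * x i = ((Complex.normSq (x i) : ℝ) : ℂ) := by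
      rw [mul_comm, Complex.mul_conj]
    rw [mul_assoc, h, ← Complex.ofReal_mul, Complex.ofReal_re]
    exact mul_nonneg (hd i) (Complex.normSq_nonneg _)

end QC

set_option maxHeartbeats 2000000 in
open QC in
/-- For q > 1, the q-Cesàro factorable matrix satisfies M Q M* = M* P M with the
stated diagonal operators, and Q ≥ I ≥ (1/2)P and (q+1)P ≥ I ≥ (1/(q+1))Q;
hence M is both posinormal and coposinormal. -/
theorem qCesaro_posinormal_coposinormal (q : ℝ) (hq : 1 < q)
    (M P Q : lp (fun _ : ℕ => ℂ) 2 →L[ℂ] lp (fun _ : ℕ => ℂ) 2)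
    (hM : ∀ f : lp (fun _ : ℕ => ℂ) 2, ∀ i : ℕ,
      M f i = (((q - 1 : ℝ) : ℂ) / ((q : ℂ) ^ (i + 1) - 1)) *
        ∑ j ∈ Finset.range (i + 1), ((q : ℂ) ^ j) * f j)
    (hP : ∀ f : lp (fun _ : ℕ => ℂ) 2, ∀ n : ℕ,
      P f n = ((((q ^ (n + 1) - 1) * (q ^ (n + 2) + q ^ (n + 1) - 1)) /
        (q ^ (n + 1) * (q ^ (n + 2) - 1)) : ℝ) : ℂ) * f n)
    (hQ : ∀ f : lp (fun _ : ℕ => ℂ) 2, ∀ n : ℕ,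
      Q f n = ((1 + 1 / q - 1 / q ^ (n + 1) : ℝ) : ℂ) * f n) :
    M ∘L Q ∘L adjoint M = adjoint M ∘L P ∘L M ∧
    (Q - 1).IsPositive ∧
    ((1 : lp (fun _ : ℕ => ℂ) 2 →L[ℂ] lp (fun _ : ℕ => ℂ) 2) - (1 / 2 : ℂ) • P).IsPositive ∧
    ((((q + 1 : ℝ) : ℂ)) • P - 1).IsPositive ∧
    ((1 : lp (fun _ : ℕ => ℂ) 2 →L[ℂ] lp (fun _ : ℕ => ℂ) 2) - (((1 / (q + 1) : ℝ) : ℂ)) • Q).IsPositive ∧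
    (∃ γ : ℝ, 0 ≤ γ ∧ (((γ : ℂ) ^ 2) • (adjoint M ∘L M) - M ∘L adjoint M).IsPositive) ∧
    (∃ γ : ℝ, 0 ≤ γ ∧ (((γ : ℂ) ^ 2) • (M ∘L adjoint M) - adjoint M ∘L M).IsPositive) := by
  have hq1 : (0:ℝ) < q + 1 := by linarith
  have hkey : M ∘L Q ∘L adjoint M = adjoint M ∘L P ∘L M := key M hM Q P hP hQ hq
  have hk : ∀ x, M (Q ((adjoint M) x)) = (adjoint M) (P (M x)) := by
    intro x
    have := congrArg (fun T : H →L[ℂ] H => T x) hkey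
    simpa [ContinuousLinearMap.comp_apply] using this
  -- positivity of the four diagonal combinations
  have pos1 : (Q - 1).IsPositive := by
    refine diag_isPositive _ (fun n => qc q n - 1) (fun n => by show (0:ℝ) ≤ qc q n - 1; linarith [qc_ge_one hq n]) ?_
    intro f n
    rw [ContinuousLinearMap.sub_apply, ContinuousLinearMap.one_apply, lp.coeFn_sub,
      Pi.sub_apply, hQ]
    unfold qc
    push_cast
    ring
  have pos2 : ((1 : H →L[ℂ] H) - (1 / 2 : ℂ) • P).IsPositive := by
    refine diag_isPositive _ (fun n => 1 - pc q n / 2) (fun n => by show (0:ℝ) ≤ 1 - pc q n / 2; linarith [pc_le_two hq n]) ?_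
    intro f n
    rw [ContinuousLinearMap.sub_apply, ContinuousLinearMap.one_apply,
      ContinuousLinearMap.smul_apply, lp.coeFn_sub, Pi.sub_apply, lp.coeFn_smul, Pi.smul_apply,
      smul_eq_mul, hP]
    unfold pc
    push_cast
    ring
  have pos3 : ((((q + 1 : ℝ) : ℂ)) • P - 1).IsPositive := by
    refine diag_isPositive _ (fun n => (q + 1) * pc q n - 1)
      (fun n => by show (0:ℝ) ≤ (q + 1) * pc q n - 1; linarith [pc_lb hq n]) ?_
    intro f n
    rw [ContinuousLinearMap.sub_apply, ContinuousLinearMap.one_apply,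
      ContinuousLinearMap.smul_apply, lp.coeFn_sub, Pi.sub_apply, lp.coeFn_smul, Pi.smul_apply,
      smul_eq_mul, hP]
    unfold pc
    push_cast
    ring
  have pos4 : ((1 : H →L[ℂ] H) - (((1 / (q + 1) : ℝ) : ℂ)) • Q).IsPositive := by
    refine diag_isPositive _ (fun n => 1 - 1 / (q + 1) * qc q n) (fun n => by show (0:ℝ) ≤ 1 - 1 / (q + 1) * qc q n; exact qc_ub' hq n) ?_
    intro f n
    rw [ContinuousLinearMap.sub_apply, ContinuousLinearMap.one_apply,
      ContinuousLinearMap.smul_apply, lp.coeFn_sub, Pi.sub_apply, lp.coeFn_smul, Pi.smul_apply,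
      smul_eq_mul, hQ]
    unfold qc
    push_cast
    ring
  have pos5 : ((2 : ℂ) • (1 : H →L[ℂ] H) - P).IsPositive := by
    refine diag_isPositive _ (fun n => 2 - pc q n) (fun n => by show (0:ℝ) ≤ 2 - pc q n; linarith [pc_le_two hq n]) ?_
    intro f n
    rw [ContinuousLinearMap.sub_apply, ContinuousLinearMap.smul_apply,
      ContinuousLinearMap.one_apply, lp.coeFn_sub, Pi.sub_apply, lp.coeFn_smul, Pi.smul_apply,
      smul_eq_mul, hP]
    unfold pc
    push_cast
    ring
  have pos6 : ((((q + 1 : ℝ) : ℂ) ^ 2) • (1 : H →L[ℂ] H) - (((q + 1 : ℝ) : ℂ)) • Q).IsPositive := by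
    refine diag_isPositive _ (fun n => (q + 1) ^ 2 - (q + 1) * qc q n) (fun n => ?_) ?_
    · show (0:ℝ) ≤ (q + 1) ^ 2 - (q + 1) * qc q n
      have h1 := qc_le hq n
      nlinarith
    intro f n
    rw [ContinuousLinearMap.sub_apply, ContinuousLinearMap.smul_apply,
      ContinuousLinearMap.smul_apply, ContinuousLinearMap.one_apply, lp.coeFn_sub, Pi.sub_apply,
      lp.coeFn_smul, lp.coeFn_smul, Pi.smul_apply, Pi.smul_apply, smul_eq_mul, smul_eq_mul, hQ]
    unfold qc
    push_cast
    ring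
  refine ⟨hkey, pos1, pos2, pos3, pos4, ⟨Real.sqrt 2, Real.sqrt_nonneg 2, ?_⟩,
    ⟨q + 1, le_of_lt hq1, ?_⟩⟩
  · have h2 : (((Real.sqrt 2 : ℝ) : ℂ)) ^ 2 = (2 : ℂ) := by
      rw [← Complex.ofReal_pow, Real.sq_sqrt (by norm_num : (0:ℝ) ≤ 2)]
      norm_num
    have hid : ((2 : ℂ)) • (adjoint M ∘L M) - M ∘L adjoint M
        = (adjoint M) ∘L ((2 : ℂ) • (1 : H →L[ℂ] H) - P) ∘L M
          + M ∘L (Q - 1) ∘L adjoint M := by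
      refine ContinuousLinearMap.ext fun x => ?_
      simp only [ContinuousLinearMap.sub_apply, ContinuousLinearMap.add_apply,
        ContinuousLinearMap.comp_apply, ContinuousLinearMap.smul_apply,
        ContinuousLinearMap.one_apply, map_sub, map_smul]
      rw [hk]
      abel
    rw [h2, hid]
    exact (pos5.adjoint_conj M).add (pos1.conj_adjoint M)
  · have hid : ((((q + 1 : ℝ) : ℂ)) ^ 2) • (M ∘L adjoint M) - adjoint M ∘L M
        = M ∘L (((((q + 1 : ℝ) : ℂ)) ^ 2) • (1 : H →L[ℂ] H) - (((q + 1 : ℝ) : ℂ)) • Q)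
            ∘L adjoint M
          + (adjoint M) ∘L ((((q + 1 : ℝ) : ℂ)) • P - 1) ∘L M := by
      refine ContinuousLinearMap.ext fun x => ?_
      simp only [ContinuousLinearMap.sub_apply, ContinuousLinearMap.add_apply,
        ContinuousLinearMap.comp_apply, ContinuousLinearMap.smul_apply,
        ContinuousLinearMap.one_apply, map_sub, map_smul]
      rw [hk]
      abel
    rw [hid]
    exact (pos6.conj_adjoint M).add (pos3.adjoint_conj M)
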